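/- arXiv:2411.03092 — 2 statements merged into one kernel-verified Lean document; each statement's English description precedes it below -/
import Mathlib

section
/- The radical of Ĩ, namely {λ ∈ L̃ : Ĩ(λ, μ) = 0 for all μ ∈ L̃}, equals ℤδ, the subgroup generated by δ = α_{𝟙*} − α_𝟙. -/
namespace AffineGRS

noncomputable section

/-- The vertex set `Ṽ_A` of the affine Coxeter--Dynkin diagram attached to a
triple `A = (a 0, a 1, a 2)`: it consists of `𝟙*`, `𝟙` and the branch vertices
`(i, j)` for `i ∈ {1,2,3}` and `1 ≤ j ≤ a i − 1` (coded by `Fin (a i - 1)`). -/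
inductive Vt (a : Fin 3 → ℕ) : Type where
  | star : Vt a
  | one  : Vt a
  | br   : (i : Fin 3) → Fin (a i - 1) → Vt a

def vtEquiv (a : Fin 3 → ℕ) : Vt a ≃ (Unit ⊕ Unit ⊕ (Σ i : Fin 3, Fin (a i - 1))) where
  toFun v :=
    match v with
    | Vt.star => Sum.inl ()
    | Vt.one => Sum.inr (Sum.inl ())
    | Vt.br i j => Sum.inr (Sum.inr ⟨i, j⟩)
  invFun x :=
    match x with
    | Sum.inl _ => Vt.star
    | Sum.inr (Sum.inl _) => Vt.one
    | Sum.inr (Sum.inr ⟨i, j⟩) => Vt.br i j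
  left_inv v := by cases v <;> rfl
  right_inv x := by rcases x with _ | (_ | ⟨i, j⟩) <;> rfl

instance (a : Fin 3 → ℕ) : DecidableEq (Vt a) := (vtEquiv a).decidableEq
instance (a : Fin 3 → ℕ) : Fintype (Vt a) := Fintype.ofEquiv _ (vtEquiv a).symm

/-- The entries `Ĩ(α_u, α_v)` of the Cartan form on the basis `{α_v : v ∈ Ṽ_A}`. -/
def cartan (a : Fin 3 → ℕ) : Vt a → Vt a → ℤ
  | Vt.star, Vt.star => 2
  | Vt.one, Vt.one => 2
  | Vt.star, Vt.one => 2
  | Vt.one, Vt.star => 2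
  | Vt.star, Vt.br _ j => if (j : ℕ) = 0 then -1 else 0
  | Vt.br _ j, Vt.star => if (j : ℕ) = 0 then -1 else 0
  | Vt.one, Vt.br _ j => if (j : ℕ) = 0 then -1 else 0
  | Vt.br _ j, Vt.one => if (j : ℕ) = 0 then -1 else 0
  | Vt.br i j, Vt.br i' j' =>
      if i = i' ∧ ((j : ℕ) = (j' : ℕ) + 1 ∨ (j' : ℕ) = (j : ℕ) + 1) then -1
      else if i = i' ∧ (j : ℕ) = (j' : ℕ) then 2 else 0

/-- The root lattice `L̃`: the free `ℤ`-module with basis `{α_v : v ∈ Ṽ_A}`. -/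
abbrev Lt (a : Fin 3 → ℕ) : Type := Vt a →₀ ℤ

/-- The basis vector `α_v ∈ L̃`. -/
def gen (a : Fin 3 → ℕ) (v : Vt a) : Lt a := Finsupp.single v 1

/-- The symmetric bilinear form `Ĩ` on `L̃`. -/
def Iform (a : Fin 3 → ℕ) (x y : Lt a) : ℤ :=
  x.sum fun u xu => y.sum fun v yv => xu * yv * cartan a u v

/-- `δ := α_{𝟙*} − α_𝟙`. -/
def delta (a : Fin 3 → ℕ) : Lt a := gen a Vt.star - gen a Vt.one

/-- The reflection `r_α(x) = x − Ĩ(α, x) α` (for `α` with `Ĩ(α,α) = 2`). -/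
def reflect (a : Fin 3 → ℕ) (α : Lt a) (x : Lt a) : Lt a := x - Iform a α x • α

/-- The composite `r_{α_{(i,1)}} ∘ r_{α_{(i,2)}} ∘ ⋯ ∘ r_{α_{(i, a i − 1)}}`. -/
def branchComp (a : Fin 3 → ℕ) (i : Fin 3) : Lt a → Lt a :=
  (List.finRange (a i - 1)).foldr (fun j f => reflect a (gen a (Vt.br i j)) ∘ f) id

/-- The Coxeter transformation
`c̃_A := r_{α_{𝟙*}} ∘ r_{α_𝟙} ∘ r_{α_{(1,1)}} ∘ ⋯ ∘ r_{α_{(3, a₃ − 1)}}`. -/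
def coxeter (a : Fin 3 → ℕ) : Lt a → Lt a :=
  reflect a (gen a Vt.star) ∘ reflect a (gen a Vt.one) ∘
    branchComp a 0 ∘ branchComp a 1 ∘ branchComp a 2

/-- A `ℤ`-bilinear form `χ` on `L̃` is an Euler form for `(L̃, Ĩ, c̃_A)` if
`Ĩ = χ + χᵀ` and `χ(λ, λ') = −χ(λ', c̃_A(λ))` (Serre duality). -/
def IsEulerForm (a : Fin 3 → ℕ) (χ : Lt a →ₗ[ℤ] Lt a →ₗ[ℤ] ℤ) : Prop :=
  (∀ x y : Lt a, Iform a x y = χ x y + χ y x) ∧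
  (∀ x y : Lt a, χ x y = - χ y (coxeter a x))

/-- The twist automorphism `t_δ(λ) = λ − χ(δ, λ) δ` (as a function). -/
def twist (a : Fin 3 → ℕ) (χ : Lt a →ₗ[ℤ] Lt a →ₗ[ℤ] ℤ) (x : Lt a) : Lt a :=
  x - χ (delta a) x • delta a

/-- The inverse of the twist automorphism, `λ ↦ λ + χ(δ, λ) δ`. -/
def twistInv (a : Fin 3 → ℕ) (χ : Lt a →ₗ[ℤ] Lt a →ₗ[ℤ] ℤ) (x : Lt a) : Lt a :=
  x + χ (delta a) x • delta a

/-- The simple reflections `r_{α_v}`, viewed as the set of `ℤ`-linear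
automorphisms of `L̃` whose underlying function is `reflect a (gen a v)`. -/
def weylGens (a : Fin 3 → ℕ) : Set (Lt a ≃ₗ[ℤ] Lt a) :=
  { g | ∃ v : Vt a, ∀ x : Lt a, g x = reflect a (gen a v) x }

/-- The affine Weyl group `W̃_A`, generated by the simple reflections. -/
def weyl (a : Fin 3 → ℕ) : Subgroup (Lt a ≃ₗ[ℤ] Lt a) := Subgroup.closure (weylGens a)

/-- The set of real roots `Δ̃_re = {w(α_v) : w ∈ W̃_A, v ∈ Ṽ_A}`. -/
def realRoots (a : Fin 3 → ℕ) : Set (Lt a) :=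
  { x | ∃ w ∈ weyl a, ∃ v : Vt a, x = w (gen a v) }

/-- The extended affine Weyl group `W̃_A^ext`, generated by `W̃_A` and `t_δ`. -/
def extWeyl (a : Fin 3 → ℕ) (χ : Lt a →ₗ[ℤ] Lt a →ₗ[ℤ] ℤ) :
    Subgroup (Lt a ≃ₗ[ℤ] Lt a) :=
  Subgroup.closure (weylGens a ∪ { g | ∀ x : Lt a, g x = twist a χ x })

-- NEW LEMMAS
lemma Iform_eq_sum (a : Fin 3 → ℕ) (x y : Lt a) :
    Iform a x y = ∑ u : Vt a, ∑ v : Vt a, x u * y v * cartan a u v := by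
  unfold Iform
  rw [Finsupp.sum_fintype]
  · exact Finset.sum_congr rfl fun u _ => by
      rw [Finsupp.sum_fintype]; intro v; simp
  · intro u; simp

lemma sum_vt (a : Fin 3 → ℕ) {M : Type*} [AddCommMonoid M] (g : Vt a → M) :
    ∑ u : Vt a, g u =
      g Vt.star + g Vt.one + ∑ i : Fin 3, ∑ j : Fin (a i - 1), g (Vt.br i j) := by
  rw [← Equiv.sum_comp (vtEquiv a).symm g]
  rw [Fintype.sum_sum_type, Fintype.sum_sum_type]
  simp [vtEquiv, Finset.sum_sigma', add_assoc]

lemma cartan_star_row (a : Fin 3 → ℕ) (v : Vt a) :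
    cartan a Vt.star v = cartan a Vt.one v := by
  cases v <;> rfl

lemma sum_fin_dite {n : ℕ} (f : Fin n → ℤ) (k : ℕ) :
    ∑ j : Fin n, (if (j : ℕ) = k then f j else 0) =
      if h : k < n then f ⟨k, h⟩ else 0 := by
  by_cases h : k < n
  · rw [dif_pos h, Finset.sum_eq_single (⟨k, h⟩ : Fin n)]
    · simp
    · intro j _ hj
      rw [if_neg]
      exact fun hj0 => hj (Fin.ext hj0)
    · simp
  · rw [dif_neg h]
    apply Finset.sum_eq_zero
    intro j _
    rw [if_neg]
    intro hj; exact h (hj ▸ j.2)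



def coef (a : Fin 3 → ℕ) (x : Lt a) (i : Fin 3) (j : ℕ) : ℤ :=
  if h : j < a i - 1 then x (Vt.br i ⟨j, h⟩) else 0

section
variable {a : Fin 3 → ℕ} {x : Lt a}
  (hx : ∀ v : Vt a, ∑ u : Vt a, x u * cartan a u v = 0)

include hx

lemma eq_star :
    2 * x Vt.star + 2 * x Vt.one =
      coef a x 0 0 + coef a x 1 0 + coef a x 2 0 := by
  have h := hx Vt.star
  rw [sum_vt] at h
  have hb : ∀ i : Fin 3,
      ∑ j : Fin (a i - 1), x (Vt.br i j) * cartan a (Vt.br i j) Vt.star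
        = -(coef a x i 0) := by
    intro i
    have : ∀ j : Fin (a i - 1),
        x (Vt.br i j) * cartan a (Vt.br i j) Vt.star
          = if (j : ℕ) = 0 then -(x (Vt.br i j)) else 0 := by
      intro j
      simp only [cartan]
      split_ifs <;> ring
    rw [Finset.sum_congr rfl (fun j _ => this j), sum_fin_dite (fun j => -(x (Vt.br i j))) 0]
    unfold coef
    split_ifs <;> simp
  rw [Fin.sum_univ_three] at h
  rw [hb 0, hb 1, hb 2] at h
  simp only [cartan] at h
  linarith

lemma eq_br (i : Fin 3) (j : ℕ) (hj : j < a i - 1) :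
    2 * coef a x i j =
      (if j = 0 then x Vt.star + x Vt.one else coef a x i (j - 1)) +
        coef a x i (j + 1) := by
  have h := hx (Vt.br i ⟨j, hj⟩)
  rw [sum_vt] at h
  have houter : ∑ i' : Fin 3,
      ∑ j' : Fin (a i' - 1), x (Vt.br i' j') * cartan a (Vt.br i' j') (Vt.br i ⟨j, hj⟩)
        = ∑ j' : Fin (a i - 1), x (Vt.br i j') * cartan a (Vt.br i j') (Vt.br i ⟨j, hj⟩) := by
    apply Finset.sum_eq_single i
    · intro i' _ hne
      apply Finset.sum_eq_zero
      intro j' _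
      simp only [cartan]
      rw [if_neg (by tauto), if_neg (by tauto), mul_zero]
    · intro hmem; exact absurd (Finset.mem_univ i) hmem
  rw [houter] at h
  have hi : ∑ j' : Fin (a i - 1), x (Vt.br i j') * cartan a (Vt.br i j') (Vt.br i ⟨j, hj⟩)
      = 2 * coef a x i j + (-(coef a x i (j+1)) +
          (if j = 0 then 0 else -(coef a x i (j-1)))) := by
    have hterm : ∀ j' : Fin (a i - 1),
        x (Vt.br i j') * cartan a (Vt.br i j') (Vt.br i ⟨j, hj⟩)
          = (if (j' : ℕ) = j then 2 * x (Vt.br i j') else 0) +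
            ((if (j' : ℕ) = j + 1 then -(x (Vt.br i j')) else 0) +
             (if (j' : ℕ) = j - 1 ∧ 0 < j then -(x (Vt.br i j')) else 0)) := by
      intro j'
      simp only [cartan, eq_self_iff_true, true_and]
      split_ifs <;> first | ring1 | (exfalso; omega)
    rw [Finset.sum_congr rfl (fun j' _ => hterm j')]
    rw [Finset.sum_add_distrib, Finset.sum_add_distrib]
    rw [sum_fin_dite (fun j' => 2 * x (Vt.br i j')) j,
        sum_fin_dite (fun j' => -(x (Vt.br i j'))) (j+1)]
    have h3 : ∑ j' : Fin (a i - 1),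
        (if (j' : ℕ) = j - 1 ∧ 0 < j then -(x (Vt.br i j')) else 0)
          = if j = 0 then 0 else -(coef a x i (j-1)) := by
      by_cases hj0 : j = 0
      · simp [hj0]
      · rw [if_neg hj0]
        have heq : ∀ j' : Fin (a i - 1),
            (if (j' : ℕ) = j - 1 ∧ 0 < j then -(x (Vt.br i j')) else 0)
              = (if (j' : ℕ) = j - 1 then -(x (Vt.br i j')) else 0) := by
          intro j'
          rcases Nat.pos_of_ne_zero hj0 with _
          by_cases hc : (j' : ℕ) = j - 1
          · rw [if_pos ⟨hc, Nat.pos_of_ne_zero hj0⟩, if_pos hc]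
          · rw [if_neg (by tauto), if_neg hc]
        rw [Finset.sum_congr rfl (fun j' _ => heq j'),
            sum_fin_dite (fun j' => -(x (Vt.br i j'))) (j-1)]
        unfold coef
        split_ifs <;> simp
    rw [h3]
    unfold coef
    rw [dif_pos hj]
    congr 1
    · split_ifs; simp
    congr 1
    split_ifs <;> simp
  rw [hi] at h
  simp only [cartan, Fin.val_mk] at h
  by_cases hj0 : j = 0
  · subst hj0
    norm_num at h ⊢
    linarith
  · simp only [if_neg hj0] at h ⊢
    linarith


lemma lin_coef (i : Fin 3) : ∀ j : ℕ, j + 1 ≤ a i →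
    coef a x i j = (x Vt.star + x Vt.one) +
      ((j : ℤ) + 1) * (coef a x i 0 - (x Vt.star + x Vt.one)) := by
  intro j
  induction j using Nat.strong_induction_on with
  | _ j ih =>
    match j with
    | 0 => intro _; push_cast; ring
    | 1 =>
      intro h1
      have h0 := eq_br hx i 0 (by omega)
      rw [if_pos rfl] at h0
      push_cast
      linarith
    | (m+2) =>
      intro h2
      have he := eq_br hx i (m+1) (by omega)
      rw [if_neg (by omega), Nat.add_sub_cancel] at he
      have i1 := ih (m+1) (by omega) (by omega)
      have i0 := ih m (by omega) (by omega)
      push_cast at i1 i0 ⊢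
      linarith

lemma branch_top (ha : ∀ i, 0 < a i) (i : Fin 3) :
    (a i : ℤ) * coef a x i 0 = ((a i : ℤ) - 1) * (x Vt.star + x Vt.one) := by
  have h0 : coef a x i (a i - 1) = 0 := dif_neg (lt_irrefl _)
  have hl := lin_coef hx i (a i - 1) (by have := ha i; omega)
  rw [h0] at hl
  have hc : ((a i - 1 : ℕ) : ℤ) + 1 = (a i : ℤ) := by
    have := ha i; omega
  rw [hc] at hl
  linear_combination -hl

end

lemma coef_apply {a : Fin 3 → ℕ} (x : Lt a) (i : Fin 3) (j : Fin (a i - 1)) :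
    coef a x i (j : ℕ) = x (Vt.br i j) := by
  simp only [coef]
  rw [dif_pos j.2]


/-- **The radical of `Ĩ` is `ℤδ`**: the set
`{λ ∈ L̃ : Ĩ(λ, μ) = 0 for all μ}` equals the subgroup generated by
`δ = α_{𝟙*} − α_𝟙`. -/
theorem radical_eq_zdelta (a : Fin 3 → ℕ) (ha : ∀ i, 0 < a i)
    (hA : 1 < (a 0 : ℚ)⁻¹ + (a 1 : ℚ)⁻¹ + (a 2 : ℚ)⁻¹) :
    { x : Lt a | ∀ y : Lt a, Iform a x y = 0 } =
      { x : Lt a | ∃ n : ℤ, x = n • delta a } := by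
  have hN : ((a 0 : ℤ) * a 1 * a 2) <
      (a 1 : ℤ) * a 2 + (a 0 : ℤ) * a 2 + (a 0 : ℤ) * a 1 := by
    have hq : ((a 0 : ℚ)) * a 1 * a 2 <
        (a 1 : ℚ) * a 2 + (a 0 : ℚ) * a 2 + (a 0 : ℚ) * a 1 := by
      have h0 : (0:ℚ) < a 0 := by exact_mod_cast ha 0
      have h1 : (0:ℚ) < a 1 := by exact_mod_cast ha 1
      have h2 : (0:ℚ) < a 2 := by exact_mod_cast ha 2
      have hm : (1:ℚ) * (a 0 * a 1 * a 2) <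
          ((a 0 : ℚ)⁻¹ + (a 1 : ℚ)⁻¹ + (a 2 : ℚ)⁻¹) * (a 0 * a 1 * a 2) :=
        mul_lt_mul_of_pos_right hA (by positivity)
      have he : ((a 0 : ℚ)⁻¹ + (a 1 : ℚ)⁻¹ + (a 2 : ℚ)⁻¹) * (a 0 * a 1 * a 2) =
          (a 1 : ℚ) * a 2 + (a 0 : ℚ) * a 2 + (a 0 : ℚ) * a 1 := by
        field_simp
      rw [he, one_mul] at hm
      linarith
    exact_mod_cast hq
  ext x
  simp only [Set.mem_setOf_eq]
  constructor
  · intro hrad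
    have key : ∀ v : Vt a, ∑ u : Vt a, x u * cartan a u v = 0 := by
      intro v
      have h := hrad (gen a v)
      rw [Iform_eq_sum] at h
      rw [← h]
      apply Finset.sum_congr rfl
      intro u _
      simp [gen, Finsupp.single_apply, mul_ite, ite_mul, Finset.sum_ite_eq]
    have hsum := eq_star key
    have hb0 := branch_top key ha 0
    have hb1 := branch_top key ha 1
    have hb2 := branch_top key ha 2
    set s := x Vt.star with hs
    set t := x Vt.one with ht
    have hst : (s + t) * (((a 1 : ℤ) * a 2 + (a 0 : ℤ) * a 2 + (a 0 : ℤ) * a 1)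
        - (a 0 : ℤ) * a 1 * a 2) = 0 := by
      linear_combination ((a 0 : ℤ) * a 1 * a 2) * hsum
        + (a 1 : ℤ) * (a 2 : ℤ) * hb0 + (a 0 : ℤ) * (a 2 : ℤ) * hb1
        + (a 0 : ℤ) * (a 1 : ℤ) * hb2
    have hst0 : s + t = 0 := by
      rcases mul_eq_zero.mp hst with h | h
      · exact h
      · exfalso; omega
    have hc0 : ∀ i : Fin 3, coef a x i 0 = 0 := by
      intro i
      have hbi := branch_top key ha i
      rw [hst0, mul_zero] at hbi
      have hai : ((a i : ℤ)) ≠ 0 := by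
        have := ha i; exact_mod_cast this.ne'
      exact (mul_eq_zero.mp hbi).resolve_left hai
    have hcall : ∀ (i : Fin 3) (j : ℕ), j + 1 ≤ a i → coef a x i j = 0 := by
      intro i j hj
      have := lin_coef key i j hj
      rw [hc0 i, hst0] at this
      simpa using this
    refine ⟨s, ?_⟩
    ext v
    have hd : ∀ v : Vt a, (s • delta a) v = s * (delta a) v := by
      intro v; simp
    cases v with
    | star => simp [← hs, delta, gen, Finsupp.single_apply]
    | one =>
      have : t = -s := by linarith
      simp [← ht, this, delta, gen, Finsupp.single_apply]
    | br i j =>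
      have h1 : x (Vt.br i j) = 0 := by
        rw [← coef_apply x i j]
        exact hcall i j (by omega)
      simp [h1, delta, gen, Finsupp.single_apply]
  · rintro ⟨n, rfl⟩ y
    rw [Iform_eq_sum, sum_vt]
    have hsv : (n • delta a) Vt.star = n := by
      simp [delta, gen, Finsupp.single_apply]
    have hov : (n • delta a) Vt.one = -n := by
      simp [delta, gen, Finsupp.single_apply]
    have hbv : ∀ (i : Fin 3) (j : Fin (a i - 1)), (n • delta a) (Vt.br i j) = 0 := by
      intro i j; simp [delta, gen, Finsupp.single_apply]
    simp only [hsv, hov, hbv, zero_mul, Finset.sum_const_zero, add_zero]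
    rw [← Finset.sum_add_distrib]
    apply Finset.sum_eq_zero
    intro v _
    rw [cartan_star_row a v]
    ring

end
end AffineGRS
end

section
/- The twist automorphism preserves the set of real roots: t_δ(Δ̃_re) = Δ̃_re, where Δ̃_re = {w(α_v) : w ∈ W̃_A, v ∈ Ṽ_A}. -/
namespace AffineGRS

noncomputable section

section AuxDev

variable {a : Fin 3 → ℕ}

/-- Row of the Cartan form as a linear functional. -/
def rowform (a : Fin 3 → ℕ) (u : Vt a) : Lt a →ₗ[ℤ] ℤ :=
  Finsupp.lsum ℤ (fun v => LinearMap.toSpanSingleton ℤ ℤ (cartan a u v))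

/-- The Cartan form as a bilinear map. -/
def IformL (a : Fin 3 → ℕ) : Lt a →ₗ[ℤ] Lt a →ₗ[ℤ] ℤ :=
  Finsupp.lsum ℤ (fun u => LinearMap.toSpanSingleton ℤ _ (rowform a u))

lemma Iform_eq (x y : Lt a) : Iform a x y = IformL a x y := by
  unfold Iform IformL rowform
  rw [Finsupp.lsum_apply, LinearMap.finsupp_sum_apply]
  apply Finsupp.sum_congr
  intro u _
  rw [LinearMap.toSpanSingleton_apply, LinearMap.smul_apply, Finsupp.lsum_apply,
    smul_eq_mul, Finsupp.mul_sum]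
  apply Finsupp.sum_congr
  intro v _
  rw [LinearMap.toSpanSingleton_apply, smul_eq_mul]
  ring
lemma Iform_add_left (x x' y : Lt a) :
    Iform a (x + x') y = Iform a x y + Iform a x' y := by
  simp [Iform_eq]
lemma Iform_sub_left (x x' y : Lt a) :
    Iform a (x - x') y = Iform a x y - Iform a x' y := by
  simp [Iform_eq]
lemma Iform_smul_left (c : ℤ) (x y : Lt a) :
    Iform a (c • x) y = c * Iform a x y := by
  simp [Iform_eq]
lemma Iform_add_right (x y y' : Lt a) :
    Iform a x (y + y') = Iform a x y + Iform a x y' := by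
  simp [Iform_eq]
lemma Iform_sub_right (x y y' : Lt a) :
    Iform a x (y - y') = Iform a x y - Iform a x y' := by
  simp [Iform_eq]
lemma Iform_smul_right (c : ℤ) (x y : Lt a) :
    Iform a x (c • y) = c * Iform a x y := by
  simp [Iform_eq]

lemma cartan_symm (u v : Vt a) : cartan a u v = cartan a v u := by
  cases u <;> cases v <;> try rfl
  case br.br i j i' j' =>
    show (if i = i' ∧ ((j : ℕ) = (j' : ℕ) + 1 ∨ (j' : ℕ) = (j : ℕ) + 1) then (-1 : ℤ)
      else if i = i' ∧ (j : ℕ) = (j' : ℕ) then 2 else 0) =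
      (if i' = i ∧ ((j' : ℕ) = (j : ℕ) + 1 ∨ (j : ℕ) = (j' : ℕ) + 1) then (-1 : ℤ)
      else if i' = i ∧ (j' : ℕ) = (j : ℕ) then 2 else 0)
    rcases eq_or_ne i i' with h | h
    · subst h
      simp only [true_and]
      split_ifs <;> omega
    · simp [h, Ne.symm h]

lemma Iform_symm (x y : Lt a) : Iform a x y = Iform a y x := by
  unfold Iform
  rw [Finsupp.sum_comm]
  apply Finsupp.sum_congr
  intro u _
  apply Finsupp.sum_congr
  intro v _
  rw [cartan_symm]
  ring

lemma cartan_self (v : Vt a) : cartan a v v = 2 := by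
  cases v with
  | star => rfl
  | one => rfl
  | br i j =>
      show (if i = i ∧ ((j : ℕ) = (j : ℕ) + 1 ∨ (j : ℕ) = (j : ℕ) + 1) then (-1 : ℤ)
        else if i = i ∧ (j : ℕ) = (j : ℕ) then 2 else 0) = 2
      have h1 : ¬((j : ℕ) = (j : ℕ) + 1 ∨ (j : ℕ) = (j : ℕ) + 1) := by omega
      simp [h1]

lemma Iform_gen_gen (u v : Vt a) : Iform a (gen a u) (gen a v) = cartan a u v := by
  unfold Iform gen
  rw [Finsupp.sum_single_index (by simp)]
  rw [Finsupp.sum_single_index (by simp)]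
  ring

lemma cartan_star_one (u : Vt a) : cartan a u Vt.star = cartan a u Vt.one := by
  cases u <;> rfl

lemma Iform_gen_right (x : Lt a) (v : Vt a) :
    Iform a x (gen a v) = x.sum fun u xu => xu * cartan a u v := by
  unfold Iform gen
  apply Finsupp.sum_congr
  intro u _
  rw [Finsupp.sum_single_index (by simp)]
  ring

lemma Iform_delta_right (x : Lt a) : Iform a x (delta a) = 0 := by
  unfold delta
  rw [Iform_sub_right, Iform_gen_right, Iform_gen_right, ← Finsupp.sum_sub]
  have : (x.sum fun u xu => xu * cartan a u Vt.star - xu * cartan a u Vt.one) =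
      x.sum fun _ _ => (0 : ℤ) := by
    apply Finsupp.sum_congr
    intro u _
    rw [cartan_star_one]
    ring
  rw [this]
  exact Finset.sum_const_zero

lemma Iform_delta_left (x : Lt a) : Iform a (delta a) x = 0 := by
  rw [Iform_symm, Iform_delta_right]

lemma reflect_apply (α x : Lt a) : reflect a α x = x - Iform a α x • α := rfl

/-- The reflection in `α` as a linear map. -/
def reflLM (a : Fin 3 → ℕ) (α : Lt a) : Lt a →ₗ[ℤ] Lt a :=
  LinearMap.id - (IformL a α).smulRight α

lemma reflLM_apply (α x : Lt a) : reflLM a α x = reflect a α x := by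
  simp [reflLM, reflect, Iform_eq]

lemma reflect_reflect (α : Lt a) (hα : Iform a α α = 2) (x : Lt a) :
    reflect a α (reflect a α x) = x := by
  rw [reflect_apply, reflect_apply, Iform_sub_right, Iform_smul_right, hα]
  module

/-- The simple reflection `r_{α_v}` as a linear equivalence. -/
def sigma (a : Fin 3 → ℕ) (v : Vt a) : Lt a ≃ₗ[ℤ] Lt a :=
  LinearEquiv.ofLinear (reflLM a (gen a v)) (reflLM a (gen a v))
    (by
      apply LinearMap.ext
      intro x
      simp only [LinearMap.comp_apply, LinearMap.id_apply, reflLM_apply]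
      exact reflect_reflect (gen a v) (by rw [Iform_gen_gen, cartan_self]) x)
    (by
      apply LinearMap.ext
      intro x
      simp only [LinearMap.comp_apply, LinearMap.id_apply, reflLM_apply]
      exact reflect_reflect (gen a v) (by rw [Iform_gen_gen, cartan_self]) x)

lemma sigma_apply (v : Vt a) (x : Lt a) : sigma a v x = reflect a (gen a v) x :=
  reflLM_apply _ _

lemma sigma_mem (v : Vt a) : sigma a v ∈ weyl a :=
  Subgroup.subset_closure ⟨v, fun x => sigma_apply v x⟩

lemma weyl_isom_fix {g : Lt a ≃ₗ[ℤ] Lt a} (hg : g ∈ weyl a) :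
    (∀ x y, Iform a (g x) (g y) = Iform a x y) ∧ g (delta a) = delta a := by
  induction hg using Subgroup.closure_induction with
  | mem g hgen =>
      obtain ⟨v, hv⟩ := hgen
      constructor
      · intro x y
        rw [hv, hv, reflect_apply, reflect_apply]
        simp only [Iform_sub_left, Iform_sub_right, Iform_smul_left, Iform_smul_right]
        rw [Iform_gen_gen, cartan_self, Iform_symm x (gen a v)]
        ring
      · have h0 : Iform a (gen a v) (delta a) = 0 := Iform_delta_right _
        rw [hv, reflect_apply, h0, zero_smul, sub_zero]
  | one => exact ⟨fun x y => rfl, rfl⟩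
  | mul g h _ _ ihg ihh =>
      refine ⟨fun x y => ?_, ?_⟩
      · show Iform a (g (h x)) (g (h y)) = _
        rw [ihg.1, ihh.1]
      · show g (h (delta a)) = delta a
        rw [ihh.2, ihg.2]
  | inv g _ ihg =>
      constructor
      · intro x y
        have := ihg.1 (g⁻¹ x) (g⁻¹ y)
        have h1 : g (g⁻¹ x) = x := g.apply_symm_apply x
        have h2 : g (g⁻¹ y) = y := g.apply_symm_apply y
        rw [h1, h2] at this
        exact this.symm
      · have := congrArg (fun z => (g⁻¹ : Lt a ≃ₗ[ℤ] Lt a) z) ihg.2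
        have h1 : g⁻¹ (g (delta a)) = delta a := g.symm_apply_apply (delta a)
        rw [h1] at this
        exact this.symm

lemma mul_apply (g h : Lt a ≃ₗ[ℤ] Lt a) (x : Lt a) : (g * h) x = g (h x) := rfl
lemma inv_apply (g : Lt a ≃ₗ[ℤ] Lt a) (x : Lt a) : g⁻¹ x = g.symm x := rfl

/-- Conjugation of a reflection by a Weyl group element. -/
lemma conj_reflect {g : Lt a ≃ₗ[ℤ] Lt a} (hg : g ∈ weyl a) (α x : Lt a) :
    g (reflect a α (g.symm x)) = reflect a (g α) x := by
  have hI := (weyl_isom_fix hg).1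
  rw [reflect_apply, reflect_apply, map_sub, map_smul]
  congr 2
  · exact g.apply_symm_apply x
  · have := hI α (g.symm x)
    rw [g.apply_symm_apply x] at this
    exact this.symm

/-- Conjugate of a simple reflection: membership and formula. -/
lemma refl_of_root {g : Lt a ≃ₗ[ℤ] Lt a} (hg : g ∈ weyl a) (u : Vt a) :
    ∃ h ∈ weyl a, ∀ x, h x = reflect a (g (gen a u)) x := by
  refine ⟨g * sigma a u * g⁻¹, mul_mem (mul_mem hg (sigma_mem u)) (inv_mem hg), fun x => ?_⟩
  rw [mul_apply, mul_apply, inv_apply, sigma_apply]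
  exact conj_reflect hg (gen a u) x

/-- `γ` admits a translation-like element `x ↦ x + Ĩ(γ,x)δ` in the Weyl group. -/
def IsTr (a : Fin 3 → ℕ) (γ : Lt a) : Prop :=
  ∃ g ∈ weyl a, ∀ x, g x = x + Iform a γ x • delta a

lemma isTr_zero : IsTr a 0 := by
  refine ⟨1, one_mem _, fun x => ?_⟩
  have : Iform a (0 : Lt a) x = 0 := by
    have := Iform_smul_left 0 (0 : Lt a) x
    simpa using this
  rw [this, zero_smul, add_zero]
  rfl

lemma isTr_add {γ γ' : Lt a} (h : IsTr a γ) (h' : IsTr a γ') : IsTr a (γ + γ') := by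
  obtain ⟨g, hg, hgf⟩ := h
  obtain ⟨g', hg', hgf'⟩ := h'
  refine ⟨g * g', mul_mem hg hg', fun x => ?_⟩
  rw [mul_apply, hgf', hgf, Iform_add_left]
  have h1 : Iform a γ (x + Iform a γ' x • delta a) = Iform a γ x := by
    rw [Iform_add_right, Iform_smul_right, Iform_delta_right]
    ring
  rw [← hgf]
  rw [hgf, h1]
  module

lemma isTr_neg {γ : Lt a} (h : IsTr a γ) : IsTr a (-γ) := by
  obtain ⟨g, hg, hgf⟩ := h
  refine ⟨g⁻¹, inv_mem hg, fun x => ?_⟩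
  have key : g (x + Iform a (-γ) x • delta a) = x := by
    rw [hgf, Iform_add_right, Iform_smul_right, Iform_delta_right]
    have hneg : Iform a (-γ) x = -Iform a γ x := by
      have := Iform_smul_left (-1) γ x
      simpa using this
    rw [hneg]
    module
  calc g⁻¹ x = g⁻¹ (g (x + Iform a (-γ) x • delta a)) := by rw [key]
  _ = x + Iform a (-γ) x • delta a := g.symm_apply_apply _

lemma isTr_zsmul {γ : Lt a} (h : IsTr a γ) (n : ℤ) : IsTr a (n • γ) := by
  induction n using Int.induction_on with
  | zero => simpa using isTr_zero
  | succ k ih =>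
      have := isTr_add ih h
      have e : (k : ℤ) • γ + γ = ((k : ℤ) + 1) • γ := by module
      rwa [e] at this
  | pred k ih =>
      have := isTr_add ih (isTr_neg h)
      have e : (-(k : ℤ)) • γ + -γ = (-(k : ℤ) - 1) • γ := by module
      rwa [e] at this

lemma isTr_weyl {γ : Lt a} (h : IsTr a γ) {w : Lt a ≃ₗ[ℤ] Lt a} (hw : w ∈ weyl a) :
    IsTr a (w γ) := by
  obtain ⟨g, hg, hgf⟩ := h
  obtain ⟨hI, hδ⟩ := weyl_isom_fix hw
  refine ⟨w * g * w⁻¹, mul_mem (mul_mem hw hg) (inv_mem hw), fun x => ?_⟩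
  rw [mul_apply, mul_apply, inv_apply, hgf, map_add, map_smul, w.apply_symm_apply, hδ]
  congr 2
  have := hI γ (w.symm x)
  rw [w.apply_symm_apply] at this
  exact this.symm

lemma delta_eq : delta a = gen a Vt.star - gen a Vt.one := rfl

lemma isTr_gen_one : IsTr a (gen a Vt.one) := by
  refine ⟨sigma a Vt.star * sigma a Vt.one, mul_mem (sigma_mem _) (sigma_mem _), fun x => ?_⟩
  rw [mul_apply, sigma_apply, sigma_apply, reflect_apply, reflect_apply,
    Iform_sub_right, Iform_smul_right, Iform_gen_gen]
  have hstar : Iform a (gen a Vt.star) x = Iform a (gen a Vt.one) x := by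
    have h := Iform_delta_left (a := a) x
    rw [delta_eq, Iform_sub_left] at h
    linarith
  have hc : cartan a Vt.star Vt.one = 2 := rfl
  rw [hstar, hc, delta_eq]
  module

lemma isTr_step {γ : Lt a} (h : IsTr a γ) (v : Vt a)
    (hc : Iform a (gen a v) γ = -1) : IsTr a (gen a v) := by
  have h2 := isTr_weyl h (sigma_mem v)
  have e : sigma a v γ = γ + gen a v := by
    rw [sigma_apply, reflect_apply, hc]
    module
  rw [e] at h2
  have h3 := isTr_add h2 (isTr_neg h)
  have e2 : γ + gen a v + -γ = gen a v := by module
  rwa [e2] at h3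

lemma isTr_br (i : Fin 3) (j : Fin (a i - 1)) : IsTr a (gen a (Vt.br i j)) := by
  suffices H : ∀ n (hn : n < a i - 1), IsTr a (gen a (Vt.br i ⟨n, hn⟩)) by
    have := H j j.2
    simpa using this
  intro n
  induction n with
  | zero =>
      intro hn
      refine isTr_step isTr_gen_one _ ?_
      rw [Iform_gen_gen]
      show (if ((⟨0, hn⟩ : Fin (a i - 1)) : ℕ) = 0 then (-1 : ℤ) else 0) = -1
      simp
  | succ k ih =>
      intro hn
      have hk : k < a i - 1 := by omega
      refine isTr_step (ih hk) _ ?_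
      rw [Iform_gen_gen]
      show (if i = i ∧ ((k + 1 : ℕ) = k + 1 ∨ (k : ℕ) = k + 1 + 1) then (-1 : ℤ)
        else if i = i ∧ (k + 1 : ℕ) = k then 2 else 0) = -1
      have hcond : i = i ∧ ((k + 1 : ℕ) = k + 1 ∨ (k : ℕ) = k + 1 + 1) := ⟨rfl, Or.inl rfl⟩
      rw [if_pos hcond]

lemma shift_root (v : Vt a) (n : ℤ) :
    ∃ w ∈ weyl a, ∃ u : Vt a, w (gen a u) = gen a v + n • delta a := by
  cases v with
  | one =>
      rcases Int.even_or_odd n with ⟨m, hm⟩ | ⟨m, hm⟩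
      · obtain ⟨g, hg, hgf⟩ := isTr_zsmul isTr_gen_one m
        refine ⟨g, hg, Vt.one, ?_⟩
        rw [hgf, Iform_smul_left, Iform_gen_gen, cartan_self, hm]
        module
      · obtain ⟨g, hg, hgf⟩ := isTr_zsmul isTr_gen_one m
        refine ⟨g, hg, Vt.star, ?_⟩
        rw [hgf, Iform_smul_left, Iform_gen_gen]
        have hc : cartan a Vt.one Vt.star = 2 := rfl
        rw [hc, hm, show gen a Vt.star = gen a Vt.one + delta a by rw [delta_eq]; module]
        module
  | star =>
      rcases Int.even_or_odd n with ⟨m, hm⟩ | ⟨m, hm⟩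
      · obtain ⟨g, hg, hgf⟩ := isTr_zsmul isTr_gen_one m
        refine ⟨g, hg, Vt.star, ?_⟩
        rw [hgf, Iform_smul_left, Iform_gen_gen]
        have hc : cartan a Vt.one Vt.star = 2 := rfl
        rw [hc, hm]
        module
      · obtain ⟨g, hg, hgf⟩ := isTr_zsmul isTr_gen_one (m + 1)
        refine ⟨g, hg, Vt.one, ?_⟩
        rw [hgf, Iform_smul_left, Iform_gen_gen, cartan_self, hm,
          show gen a Vt.one = gen a Vt.star - delta a by rw [delta_eq]; module]
        module
  | br i j =>
      have key : ∃ γ0 : Lt a, IsTr a γ0 ∧ Iform a γ0 (gen a (Vt.br i j)) = -1 := by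
        by_cases hj : (j : ℕ) = 0
        · refine ⟨gen a Vt.one, isTr_gen_one, ?_⟩
          rw [Iform_gen_gen]
          show (if (j : ℕ) = 0 then (-1 : ℤ) else 0) = -1
          simp [hj]
        · have hk1 : (j : ℕ) - 1 < a i - 1 := by
            have := j.2
            omega
          refine ⟨gen a (Vt.br i ⟨(j : ℕ) - 1, hk1⟩), isTr_br i _, ?_⟩
          rw [Iform_gen_gen]
          show (if i = i ∧ ((j : ℕ) - 1 = (j : ℕ) + 1 ∨ (j : ℕ) = (j : ℕ) - 1 + 1) then (-1 : ℤ)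
            else if i = i ∧ (j : ℕ) - 1 = (j : ℕ) then 2 else 0) = -1
          have hcond : i = i ∧ ((j : ℕ) - 1 = (j : ℕ) + 1 ∨ (j : ℕ) = (j : ℕ) - 1 + 1) :=
            ⟨rfl, Or.inr (by omega)⟩
          rw [if_pos hcond]
      obtain ⟨γ0, hγ0, hI⟩ := key
      obtain ⟨g, hg, hgf⟩ := isTr_zsmul hγ0 (-n)
      refine ⟨g, hg, Vt.br i j, ?_⟩
      rw [hgf, Iform_smul_left, hI]
      module

lemma conj_twist (c : Lt a →ₗ[ℤ] ℤ) (hcδ : c (delta a) = 0)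
    (shift : ∀ v : Vt a, ∃ w ∈ weyl a, ∃ u : Vt a,
      w (gen a u) = gen a v - c (gen a v) • delta a)
    {g : Lt a ≃ₗ[ℤ] Lt a} (hg : g ∈ weyl a) :
    ∃ g' ∈ weyl a, ∀ x, g x - c (g x) • delta a = g' (x - c x • delta a) := by
  induction hg using Subgroup.closure_induction with
  | mem g hgen =>
      obtain ⟨v, hv⟩ := hgen
      obtain ⟨w₀, hw₀, u, hu⟩ := shift v
      obtain ⟨h, hh, hhf⟩ := refl_of_root hw₀ u
      refine ⟨h, hh, fun x => ?_⟩
      rw [hv, hhf, hu, reflect_apply, reflect_apply, map_sub, map_smul]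
      have hR : Iform a (gen a v - c (gen a v) • delta a) (x - c x • delta a)
          = Iform a (gen a v) x := by
        simp only [Iform_sub_left, Iform_sub_right, Iform_smul_left, Iform_smul_right,
          Iform_delta_left, Iform_delta_right]
        ring
      rw [hR, smul_eq_mul]
      module
  | one => exact ⟨1, one_mem _, fun x => rfl⟩
  | mul g h _ _ ihg ihh =>
      obtain ⟨g', hg', hgf⟩ := ihg
      obtain ⟨h', hh', hhf⟩ := ihh
      refine ⟨g' * h', mul_mem hg' hh', fun x => ?_⟩
      rw [mul_apply, hgf, hhf, mul_apply]
  | inv g _ ihg =>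
      obtain ⟨g', hg', hgf⟩ := ihg
      refine ⟨g'⁻¹, inv_mem hg', fun x => ?_⟩
      have h1 := hgf (g⁻¹ x)
      rw [show g (g⁻¹ x) = x from g.apply_symm_apply x] at h1
      rw [h1]
      exact (g'.symm_apply_apply _).symm

end AuxDev

/-- **The twist preserves the set of real roots** (Lemma 3.4 (3) of the
paper): `t_δ(Δ̃_re) = Δ̃_re`, where `Δ̃_re = {w(α_v) : w ∈ W̃_A, v ∈ Ṽ_A}`. -/
theorem twist_preserves_realRoots (a : Fin 3 → ℕ) (ha : ∀ i, 0 < a i)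
    (hA : 1 < (a 0 : ℚ)⁻¹ + (a 1 : ℚ)⁻¹ + (a 2 : ℚ)⁻¹)
    (χ : Lt a →ₗ[ℤ] Lt a →ₗ[ℤ] ℤ) (hχ : IsEulerForm a χ) :
    twist a χ '' realRoots a = realRoots a := by
  obtain ⟨hsym, _⟩ := hχ
  have hcδ : χ (delta a) (delta a) = 0 := by
    have h := hsym (delta a) (delta a)
    rw [Iform_delta_left] at h
    linarith
  have hcδ' : (-(χ (delta a))) (delta a) = 0 := by
    rw [LinearMap.neg_apply, hcδ, neg_zero]
  have twist_eq : ∀ x, twist a χ x = x - χ (delta a) x • delta a := fun _ => rfl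
  have twistInv_eq : ∀ x, twistInv a χ x = x - (-(χ (delta a))) x • delta a := by
    intro x
    show x + χ (delta a) x • delta a = _
    rw [LinearMap.neg_apply]
    module
  have shift1 : ∀ v : Vt a, ∃ w ∈ weyl a, ∃ u : Vt a,
      w (gen a u) = gen a v - χ (delta a) (gen a v) • delta a := by
    intro v
    obtain ⟨w, hw, u, hu⟩ := shift_root v (-(χ (delta a) (gen a v)))
    exact ⟨w, hw, u, by rw [hu]; module⟩
  have shift2 : ∀ v : Vt a, ∃ w ∈ weyl a, ∃ u : Vt a,
      w (gen a u) = gen a v - (-(χ (delta a))) (gen a v) • delta a := by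
    intro v
    obtain ⟨w, hw, u, hu⟩ := shift_root v (χ (delta a) (gen a v))
    exact ⟨w, hw, u, by rw [hu, LinearMap.neg_apply]; module⟩
  ext z
  constructor
  · rintro ⟨x, ⟨w, hw, v, rfl⟩, rfl⟩
    obtain ⟨w', hw', hf⟩ := conj_twist (χ (delta a)) hcδ shift1 hw
    obtain ⟨w₀, hw₀, u, hu⟩ := shift1 v
    refine ⟨w' * w₀, mul_mem hw' hw₀, u, ?_⟩
    rw [twist_eq, hf, ← hu, mul_apply]
  · rintro ⟨w, hw, v, rfl⟩
    obtain ⟨w', hw', hf⟩ := conj_twist (-(χ (delta a))) hcδ' shift2 hw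
    obtain ⟨w₀, hw₀, u, hu⟩ := shift2 v
    refine ⟨twistInv a χ (w (gen a v)), ⟨w' * w₀, mul_mem hw' hw₀, u, ?_⟩, ?_⟩
    · rw [twistInv_eq, hf, ← hu, mul_apply]
    · show twist a χ (twistInv a χ (w (gen a v))) = w (gen a v)
      rw [twist_eq, twistInv_eq]
      simp only [LinearMap.neg_apply, map_sub, map_smul, smul_eq_mul, hcδ, mul_zero,
        sub_zero, neg_neg]
      module

end
end AffineGRS
end
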